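/- Let c be a real number with -2 ≤ c ≤ 1/4 and a_c = (1 + √(1 - 4c))/2. Then the real filled Julia set of f_c(x) = x^2 + c equals the interval [-a_c, a_c], i.e., a real number x has bounded forward orbit under f_c if and only if -a_c ≤ x ≤ a_c. -/
import Mathlib


theorem stmt_5 (c : ℝ) (hc1 : -2 ≤ c) (hc2 : c ≤ 1/4)
    (a : ℝ) (ha : a = (1 + Real.sqrt (1 - 4*c))/2) (x : ℝ) :
    (∃ B : ℝ, ∀ n : ℕ, |(fun y : ℝ => y^2 + c)^[n] x| ≤ B) ↔
      (-a ≤ x ∧ x ≤ a) := by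
  have hs0 : (0:ℝ) ≤ 1 - 4*c := by linarith
  have hsnn : 0 ≤ Real.sqrt (1 - 4*c) := Real.sqrt_nonneg _
  have hssq : Real.sqrt (1 - 4*c) ^ 2 = 1 - 4*c := Real.sq_sqrt hs0
  have hfix : a^2 + c = a := by rw [ha]; nlinarith [hssq]
  have ha12 : 1/2 ≤ a := by rw [ha]; linarith
  have ha2 : a ≤ 2 := by rw [ha]; nlinarith [hssq, hsnn]
  constructor
  · rintro ⟨B, hB⟩
    by_contra h
    have hx : a < |x| := by
      push_neg at h
      by_cases h1 : -a ≤ x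
      · exact lt_of_lt_of_le (h h1) (le_abs_self x)
      · push_neg at h1
        calc a < -x := by linarith
        _ ≤ |x| := neg_le_abs x
    set t : ℝ := |x| with ht
    set δ : ℝ := t^2 - t + c with hδdef
    have hδ : 0 < δ := by nlinarith [hx, ha12, hfix]
    have key : ∀ n : ℕ, t + (n+1)*δ ≤ (fun y : ℝ => y^2 + c)^[n+1] x := by
      intro n
      induction n with
      | zero =>
        have h5 : x^2 = t^2 := (sq_abs x).symm
        show _ ≤ x^2 + c
        push_cast
        nlinarith
      | succ n ih =>
        rw [Function.iterate_succ_apply']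
        set y := (fun y : ℝ => y^2 + c)^[n+1] x with hy
        have hyt : t ≤ y := by
          have : (0:ℝ) ≤ (n+1) := by positivity
          nlinarith
        show _ ≤ y^2 + c
        have hn : (0:ℝ) ≤ (n:ℝ) := Nat.cast_nonneg n
        push_cast
        nlinarith [hyt, hx, ha12]
    obtain ⟨n, hn⟩ := exists_nat_gt ((B - t)/δ)
    have h1 := key n
    have h2 := hB (n+1)
    have h3 : (fun y : ℝ => y^2 + c)^[n+1] x ≤ B :=
      le_trans (le_abs_self _) h2
    have h4 : B - t < n * δ := by
      rw [div_lt_iff₀ hδ] at hn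
      linarith
    push_cast at h1
    nlinarith
  · rintro ⟨h1, h2⟩
    refine ⟨a, fun n => ?_⟩
    induction n with
    | zero => simp; exact abs_le.mpr ⟨h1, h2⟩
    | succ n ih =>
      rw [Function.iterate_succ_apply']
      set y := (fun y : ℝ => y^2 + c)^[n] x with hy
      obtain ⟨hl, hr⟩ := abs_le.mp ih
      rw [abs_le]
      constructor
      · nlinarith
      · nlinarith
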